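/- Let $(A_n)$ be a sequence of events with $P(A_n) \to 0$, and let $m \geq 0$ be a fixed integer. If $\sum_{n=1}^\infty P(A_n^c \cap A_{n+1}^c \cap \cdots \cap A_{n+m-1}^c \cap A_{n+m}) < \infty$, then $P(\limsup_n A_n) = 0$. -/

import Mathlib

open MeasureTheory Filter Set

theorem balakrishnan_stepanov {Ω : Type*} [MeasurableSpace Ω] (μ : Measure Ω)
    [IsProbabilityMeasure μ] (A : ℕ → Set Ω) (hA : ∀ n, MeasurableSet (A n))
    (m : ℕ)
    (h0 : Tendsto (fun n => μ (A n)) atTop (nhds 0))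
    (h : ∑' n, μ ((⋂ j ∈ Finset.range m, (A (n + j))ᶜ) ∩ A (n + m)) < ⊤) :
    μ (limsup A atTop) = 0 := by
  classical
  set B : ℕ → Set Ω := fun n => (⋂ j ∈ Finset.range m, (A (n + j))ᶜ) ∩ A (n + m) with hB
  -- key inclusion
  have key : ∀ n, (⋃ k, ⋃ _ : k ≥ n, A k) ⊆
      (⋃ j ∈ Finset.range m, A (n + j)) ∪ ⋃ i, B (n + i) := by
    intro n ω hω
    simp only [mem_iUnion] at hω
    obtain ⟨k, hk, hωk⟩ := hω
    have hex : ∃ i, n ≤ i ∧ ω ∈ A i := ⟨k, hk, hωk⟩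
    obtain ⟨hnk₀, hωk₀⟩ := Nat.find_spec hex
    set k₀ := Nat.find hex with hk₀
    by_cases hcase : k₀ < n + m
    · left
      refine mem_biUnion (Finset.mem_range.mpr (show k₀ - n < m by omega)) ?_
      rwa [show n + (k₀ - n) = k₀ by omega]
    · right
      push_neg at hcase
      refine mem_iUnion.mpr ⟨k₀ - m - n, ?_⟩
      have heq : n + (k₀ - m - n) = k₀ - m := by omega
      simp only [hB, heq]
      constructor
      · simp only [mem_iInter, mem_compl_iff, Finset.mem_range]
        intro j hj hmem
        exact Nat.find_min hex (show k₀ - m + j < k₀ by omega) ⟨by omega, hmem⟩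
      · rw [show k₀ - m + m = k₀ by omega]
        exact hωk₀
  have hbound : ∀ n, μ (limsup A atTop) ≤
      (∑ j ∈ Finset.range m, μ (A (n + j))) + ∑' i, μ (B (i + n)) := by
    intro n
    have hsub : limsup A atTop ⊆ ⋃ k, ⋃ _ : k ≥ n, A k := by
      have := limsup_eq_iInf_iSup_of_nat (u := A)
      rw [this]
      exact iInf_le _ n
    calc μ (limsup A atTop) ≤ μ ((⋃ j ∈ Finset.range m, A (n + j)) ∪ ⋃ i, B (n + i)) :=
          measure_mono (hsub.trans (key n))
      _ ≤ μ (⋃ j ∈ Finset.range m, A (n + j)) + μ (⋃ i, B (n + i)) := measure_union_le _ _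
      _ ≤ (∑ j ∈ Finset.range m, μ (A (n + j))) + ∑' i, μ (B (i + n)) := by
          gcongr
          · exact measure_biUnion_finset_le _ _
          · calc μ (⋃ i, B (n + i)) ≤ ∑' i, μ (B (n + i)) := measure_iUnion_le _
              _ = ∑' i, μ (B (i + n)) := by
                  refine tsum_congr fun i => by rw [Nat.add_comm]
  have htend : Tendsto (fun n => (∑ j ∈ Finset.range m, μ (A (n + j))) +
      ∑' i, μ (B (i + n))) atTop (nhds (0 + 0)) := by
    apply Tendsto.add
    · have := tendsto_finset_sum (Finset.range m)
        (fun j _ => h0.comp (tendsto_add_atTop_nat j))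
      simpa using this
    · exact ENNReal.tendsto_sum_nat_add (fun k => μ (B k)) h.ne
  rw [zero_add] at htend
  exact le_antisymm (ge_of_tendsto' htend hbound) zero_le
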